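/- arXiv:2408.09539 — 4 statements merged into one kernel-verified Lean document; each statement's English description precedes it below -/
import Mathlib

section
/- Aggregated alignment bound (bound A1). Let E be a real inner product space, let x ∈ E be nonzero, and let v = x/‖x‖. Let ι be a finite index set with nonnegative weights (α_m)_{m∈ι} summing to 1, let B ⊆ ι, and set C_α = Σ_{m∉B} α_m. Let (u_m)_{m∈ι} be unit vectors such that ‖u_m − v‖ ≤ θ for every m ∉ B (the vectors u_m for m ∈ B are arbitrary unit vectors). Then ⟨x, Σ_{m∈ι} α_m u_m⟩ ≥ ((2 − θ²/2)·C_α − 1)·‖x‖. -/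
open Finset
open scoped InnerProductSpace

/-- Aggregated alignment bound (bound A1). -/
theorem aggregated_alignment_bound
    {E : Type*} [NormedAddCommGroup E] [InnerProductSpace ℝ E]
    {ι : Type*} [Fintype ι] [DecidableEq ι]
    (x : E) (hx : x ≠ 0)
    (α : ι → ℝ) (hα : ∀ m, 0 ≤ α m) (hαsum : ∑ m, α m = 1)
    (B : Finset ι)
    (Cα θ : ℝ) (hCα : Cα = ∑ m ∈ Bᶜ, α m)
    (u : ι → E) (hu : ∀ m, ‖u m‖ = 1)
    (hθ : ∀ m ∉ B, ‖u m - ‖x‖⁻¹ • x‖ ≤ θ) :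
    ⟪x, ∑ m, α m • u m⟫_ℝ ≥ ((2 - θ ^ 2 / 2) * Cα - 1) * ‖x‖ := by
  have hxn : (0:ℝ) < ‖x‖ := norm_pos_iff.mpr hx
  set v : E := ‖x‖⁻¹ • x with hv
  have hvnorm : ‖v‖ = 1 := by
    rw [hv, norm_smul, norm_inv, norm_norm, inv_mul_cancel₀ (ne_of_gt hxn)]
  -- inner of x with u m for honest m
  have hhonest : ∀ m ∉ B, (1 - θ ^ 2 / 2) * ‖x‖ ≤ ⟪x, u m⟫_ℝ := by
    intro m hm
    have h1 : ‖u m - v‖ ^ 2 ≤ θ ^ 2 := by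
      have := hθ m hm
      have hθ0 : 0 ≤ θ := le_trans (norm_nonneg _) this
      nlinarith [norm_nonneg (u m - v)]
    have h2 : ‖u m - v‖ ^ 2 = 2 - 2 * ⟪u m, v⟫_ℝ := by
      rw [← real_inner_self_eq_norm_sq]
      rw [inner_sub_sub_self]
      rw [real_inner_self_eq_norm_sq, real_inner_self_eq_norm_sq, hu m, hvnorm,
        real_inner_comm]
      ring
    have h3 : 1 - θ ^ 2 / 2 ≤ ⟪u m, v⟫_ℝ := by linarith [h1, h2.symm.le]
    have h4 : ⟪x, u m⟫_ℝ = ‖x‖ * ⟪u m, v⟫_ℝ := by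
      rw [hv, real_inner_smul_right, real_inner_comm]
      field_simp
    rw [h4]
    have := mul_le_mul_of_nonneg_left h3 (le_of_lt hxn)
    linarith
  have hbyz : ∀ m, -‖x‖ ≤ ⟪x, u m⟫_ℝ := by
    intro m
    have := abs_real_inner_le_norm x (u m)
    rw [hu m, mul_one] at this
    linarith [neg_abs_le (⟪x, u m⟫_ℝ)]
  have hsum : ⟪x, ∑ m, α m • u m⟫_ℝ = ∑ m, α m * ⟪x, u m⟫_ℝ := by
    rw [inner_sum]
    exact Finset.sum_congr rfl fun m _ => real_inner_smul_right _ _ _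
  rw [hsum, ge_iff_le, ← Finset.sum_compl_add_sum B (fun m => α m * ⟪x, u m⟫_ℝ)]
  have hBsum : ∑ m ∈ B, α m = 1 - Cα := by
    rw [hCα]
    have h := Finset.sum_compl_add_sum B α
    rw [hαsum] at h
    linarith
  have hb1 : (1 - θ ^ 2 / 2) * Cα * ‖x‖ ≤ ∑ m ∈ Bᶜ, α m * ⟪x, u m⟫_ℝ := by
    rw [hCα]
    have key : ∑ m ∈ Bᶜ, α m * ((1 - θ ^ 2 / 2) * ‖x‖) ≤ ∑ m ∈ Bᶜ, α m * ⟪x, u m⟫_ℝ := by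
      apply Finset.sum_le_sum
      intro m hm
      exact mul_le_mul_of_nonneg_left (hhonest m (Finset.mem_compl.mp hm)) (hα m)
    rw [← Finset.sum_mul] at key
    linarith
  have hb2 : -(1 - Cα) * ‖x‖ ≤ ∑ m ∈ B, α m * ⟪x, u m⟫_ℝ := by
    have : ∑ m ∈ B, α m * (-‖x‖) ≤ ∑ m ∈ B, α m * ⟪x, u m⟫_ℝ :=
      Finset.sum_le_sum fun m _ => mul_le_mul_of_nonneg_left (hbyz m) (hα m)
    calc -(1 - Cα) * ‖x‖ = (∑ m ∈ B, α m) * (-‖x‖) := by rw [hBsum]; ring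
    _ = ∑ m ∈ B, α m * (-‖x‖) := by rw [Finset.sum_mul]
    _ ≤ _ := this
  nlinarith [hb1, hb2]
end

section
/- Honest-client inner-product bound in the strongly convex case (bound D1). Suppose ⟨∇F(w1) − ∇F(w2), w1 − w2⟩ ≥ μ‖w1 − w2‖² for all w1, w2, ∇F(w*) = 0, and the bounded-heterogeneity condition with parameter θ holds at w, with ∇F(w) and ∇F_m(w) (m ∉ B) nonzero. Then Σ_{m∉B} α_m ⟨w − w*, ∇F_m(w)/‖∇F_m(w)‖⟩ ≥ μ·C_α·‖w − w*‖²/‖∇F(w)‖ − C_α·θ·‖w − w*‖. -/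
open Finset
open scoped InnerProductSpace

/-- Honest-client inner-product bound in the strongly convex case (bound D1). -/
theorem fedNGA_honest_inner_product_bound
    {E : Type*} [NormedAddCommGroup E] [InnerProductSpace ℝ E]
    {ι : Type*} [Fintype ι] [DecidableEq ι]
    (α : ι → ℝ) (hαpos : ∀ m, 0 < α m) (hαsum : ∑ m, α m = 1)
    (Fm : ι → E → ℝ) (gradFm : ι → E → E)
    (F : E → ℝ) (hF : ∀ w, F w = ∑ m, α m * Fm m w)
    (gradF : E → E) (hgradF : ∀ w, gradF w = ∑ m, α m • gradFm m w)
    (B : Finset ι) (Cα : ℝ) (hCα : Cα = ∑ m ∈ Bᶜ, α m)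
    (μ θ : ℝ)
    (hsc : ∀ w1 w2 : E, ⟪gradF w1 - gradF w2, w1 - w2⟫_ℝ ≥ μ * ‖w1 - w2‖ ^ 2)
    (wstar : E) (hstar : gradF wstar = 0)
    (w : E)
    (hgrad_ne : gradF w ≠ 0)
    (hgradm_ne : ∀ m ∉ B, gradFm m w ≠ 0)
    (hhet : ∀ m ∉ B, ‖‖gradFm m w‖⁻¹ • gradFm m w - ‖gradF w‖⁻¹ • gradF w‖ ≤ θ) :
    ∑ m ∈ Bᶜ, α m * ⟪w - wstar, ‖gradFm m w‖⁻¹ • gradFm m w⟫_ℝ ≥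
      μ * Cα * ‖w - wstar‖ ^ 2 / ‖gradF w‖ - Cα * θ * ‖w - wstar‖ := by

  have hnorm : (0:ℝ) < ‖gradF w‖ := norm_pos_iff.mpr hgrad_ne
  have hmain : ∀ m ∈ Bᶜ,
      α m * (μ * ‖w - wstar‖ ^ 2 / ‖gradF w‖ - θ * ‖w - wstar‖) ≤
      α m * ⟪w - wstar, ‖gradFm m w‖⁻¹ • gradFm m w⟫_ℝ := by
    intro m hm
    have hmB : m ∉ B := Finset.mem_compl.mp hm
    refine mul_le_mul_of_nonneg_left ?_ (hαpos m).le
    have hsc' := hsc w wstar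
    rw [hstar, sub_zero, real_inner_comm] at hsc'
    have h1 : μ * ‖w - wstar‖ ^ 2 / ‖gradF w‖ ≤ ⟪w - wstar, ‖gradF w‖⁻¹ • gradF w⟫_ℝ := by
      rw [real_inner_smul_right, div_eq_inv_mul]
      exact mul_le_mul_of_nonneg_left hsc' (inv_nonneg.mpr hnorm.le)
    have h2 : |⟪w - wstar, ‖gradFm m w‖⁻¹ • gradFm m w - ‖gradF w‖⁻¹ • gradF w⟫_ℝ| ≤
        ‖w - wstar‖ * θ := by
      calc |⟪w - wstar, ‖gradFm m w‖⁻¹ • gradFm m w - ‖gradF w‖⁻¹ • gradF w⟫_ℝ| ≤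
          ‖w - wstar‖ * ‖‖gradFm m w‖⁻¹ • gradFm m w - ‖gradF w‖⁻¹ • gradF w‖ :=
            abs_real_inner_le_norm _ _
        _ ≤ ‖w - wstar‖ * θ := mul_le_mul_of_nonneg_left (hhet m hmB) (norm_nonneg _)
    have h3 : ⟪w - wstar, ‖gradFm m w‖⁻¹ • gradFm m w⟫_ℝ =
        ⟪w - wstar, ‖gradF w‖⁻¹ • gradF w⟫_ℝ +
        ⟪w - wstar, ‖gradFm m w‖⁻¹ • gradFm m w - ‖gradF w‖⁻¹ • gradF w⟫_ℝ := by
      rw [inner_sub_right]; ring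
    rw [h3]
    have := abs_le.mp h2
    nlinarith [this.1, h1]
  have hsum := Finset.sum_le_sum hmain
  have heq : ∑ m ∈ Bᶜ, α m * (μ * ‖w - wstar‖ ^ 2 / ‖gradF w‖ - θ * ‖w - wstar‖) =
      μ * Cα * ‖w - wstar‖ ^ 2 / ‖gradF w‖ - Cα * θ * ‖w - wstar‖ := by
    rw [← Finset.sum_mul, ← hCα]; field_simp
  linarith [hsum, heq.le, heq.ge]
end

section
/- Vanishing average gradient norm (Remark 1, first bullet). Suppose F is L-smooth, bounded below by F_inf, the bounded-heterogeneity condition with parameter θ holds along all iterates, every Byzantine upload is a nonzero vector, (2 − θ²/2)·C_α − 1 > 0, the step sizes satisfy η^t > 0, Σ_{t=0}^{∞} η^t = ∞, and Σ_{t=0}^{∞} (η^t)² < ∞. Then the weighted averages (1/Σ_{t=0}^{T−1} η^t)·Σ_{t=0}^{T−1} η^t ‖∇F(w^t)‖ of the Fed-NGA iterates converge to 0 as T → ∞; consequently inf_{t} ‖∇F(w^t)‖ = 0. -/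
open Finset Filter
open scoped InnerProductSpace

/-- Vanishing average gradient norm (Remark 1, first bullet). -/
theorem fedNGA_vanishing_average_gradient
    {E : Type*} [NormedAddCommGroup E] [InnerProductSpace ℝ E]
    {ι : Type*} [Fintype ι] [DecidableEq ι]
    (α : ι → ℝ) (hαpos : ∀ m, 0 < α m) (hαsum : ∑ m, α m = 1)
    (Fm : ι → E → ℝ) (gradFm : ι → E → E)
    (F : E → ℝ) (hF : ∀ w, F w = ∑ m, α m * Fm m w)
    (gradF : E → E) (hgradF : ∀ w, gradF w = ∑ m, α m • gradFm m w)
    (B : Finset ι) (Cα : ℝ) (hCα : Cα = ∑ m ∈ Bᶜ, α m)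
    (L θ : ℝ)
    (hsmooth : ∀ w1 w2 : E, F w1 - F w2 ≤ ⟪gradF w2, w1 - w2⟫_ℝ + L / 2 * ‖w1 - w2‖ ^ 2)
    -- bounded below
    (Finf : ℝ) (hFinf : ∀ w : E, Finf ≤ F w)
    -- step sizes
    (η : ℕ → ℝ) (hηpos : ∀ t, 0 < η t)
    (hdiv : Tendsto (fun T => ∑ t ∈ range T, η t) atTop atTop)
    (hsq : Summable fun t => (η t) ^ 2)
    -- Fed-NGA iterates
    (w : ℕ → E) (g : ι → ℕ → E)
    (hg_honest : ∀ m ∉ B, ∀ t, g m t = gradFm m (w t))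
    (hg_byz : ∀ m ∈ B, ∀ t, g m t ≠ 0)
    (hupdate : ∀ t, w (t + 1) = w t - η t • ∑ m, α m • (‖g m t‖⁻¹ • g m t))
    -- bounded heterogeneity along the iterates
    (hgrad_ne : ∀ t, gradF (w t) ≠ 0)
    (hgradm_ne : ∀ t, ∀ m ∉ B, gradFm m (w t) ≠ 0)
    (hhet : ∀ t, ∀ m ∉ B,
      ‖‖gradFm m (w t)‖⁻¹ • gradFm m (w t) - ‖gradF (w t)‖⁻¹ • gradF (w t)‖ ≤ θ)
    (hcond : (2 - θ ^ 2 / 2) * Cα - 1 > 0) :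
    Tendsto
      (fun T => (1 / ∑ t ∈ range T, η t) * ∑ t ∈ range T, η t * ‖gradF (w t)‖)
      atTop (nhds 0) ∧
    ⨅ t, ‖gradF (w t)‖ = 0 := by

  -- notation
  set c : ℝ := (2 - θ ^ 2 / 2) * Cα - 1 with hc_def
  have hc : 0 < c := hcond
  set d : ℕ → E := fun t => ∑ m, α m • (‖g m t‖⁻¹ • g m t) with hd_def
  have hgne : ∀ m t, g m t ≠ 0 := by
    intro m t
    by_cases hm : m ∈ B
    · exact hg_byz m hm t
    · rw [hg_honest m hm t]; exact hgradm_ne t m hm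
  have hunit : ∀ m t, ‖(‖g m t‖⁻¹ • g m t)‖ = 1 := fun m t =>
    norm_smul_inv_norm (hgne m t)
  -- d is bounded by 1
  have hdnorm : ∀ t, ‖d t‖ ≤ 1 := by
    intro t
    calc ‖d t‖ ≤ ∑ m, ‖α m • (‖g m t‖⁻¹ • g m t)‖ := norm_sum_le _ _
    _ = ∑ m, α m := by
        refine Finset.sum_congr rfl fun m _ => ?_
        rw [norm_smul, hunit, Real.norm_eq_abs, abs_of_pos (hαpos m), mul_one]
    _ = 1 := hαsum
  -- key lower bound on the inner product
  have hkey : ∀ t, c * ‖gradF (w t)‖ ≤ ⟪gradF (w t), d t⟫_ℝ := by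
    intro t
    have hnF : (0:ℝ) < ‖gradF (w t)‖ := norm_pos_iff.mpr (hgrad_ne t)
    have hsplit : ⟪gradF (w t), d t⟫_ℝ
        = ∑ m, α m * ⟪gradF (w t), ‖g m t‖⁻¹ • g m t⟫_ℝ := by
      rw [hd_def, inner_sum]
      exact Finset.sum_congr rfl fun m _ => real_inner_smul_right _ _ _
    -- honest bound
    have honest : ∀ m ∉ B,
        (1 - θ ^ 2 / 2) * ‖gradF (w t)‖ ≤ ⟪gradF (w t), ‖g m t‖⁻¹ • g m t⟫_ℝ := by
      intro m hm
      have hgm : g m t = gradFm m (w t) := hg_honest m hm t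
      set um : E := ‖gradFm m (w t)‖⁻¹ • gradFm m (w t) with hum
      set u : E := ‖gradF (w t)‖⁻¹ • gradF (w t) with hu
      have hum1 : ‖um‖ = 1 := norm_smul_inv_norm (hgradm_ne t m hm)
      have hu1 : ‖u‖ = 1 := norm_smul_inv_norm (hgrad_ne t)
      have hdiff : ‖um - u‖ ≤ θ := hhet t m hm
      have hθ0 : (0:ℝ) ≤ θ := le_trans (norm_nonneg _) hdiff
      have hsq' : ‖um - u‖ ^ 2 ≤ θ ^ 2 := by
        apply pow_le_pow_left₀ (norm_nonneg _) hdiff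
      have hexp : ‖um - u‖ ^ 2 = 2 - 2 * ⟪um, u⟫_ℝ := by
        rw [norm_sub_sq_real, hum1, hu1]; ring
      have hip : 1 - θ ^ 2 / 2 ≤ ⟪um, u⟫_ℝ := by
        rw [hexp] at hsq'; linarith
      have hip2 : ⟪u, um⟫_ℝ = ‖gradF (w t)‖⁻¹ * ⟪gradF (w t), um⟫_ℝ := by
        rw [hu, real_inner_smul_left]
      have : (1 - θ ^ 2 / 2) * ‖gradF (w t)‖ ≤ ⟪u, um⟫_ℝ * ‖gradF (w t)‖ := by
        apply mul_le_mul_of_nonneg_right _ (le_of_lt hnF)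
        rwa [real_inner_comm] at hip
      rw [hip2] at this
      rw [hgm]
      calc (1 - θ ^ 2 / 2) * ‖gradF (w t)‖
          ≤ ‖gradF (w t)‖⁻¹ * ⟪gradF (w t), um⟫_ℝ * ‖gradF (w t)‖ := this
        _ = ⟪gradF (w t), um⟫_ℝ := by
            field_simp
    -- byzantine bound
    have byz : ∀ m, -‖gradF (w t)‖ ≤ ⟪gradF (w t), ‖g m t‖⁻¹ • g m t⟫_ℝ := by
      intro m
      have := abs_real_inner_le_norm (gradF (w t)) (‖g m t‖⁻¹ • g m t)
      rw [hunit m t, mul_one] at this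
      linarith [neg_abs_le ⟪gradF (w t), ‖g m t‖⁻¹ • g m t⟫_ℝ]
    rw [hsplit]
    have hsum_split : ∑ m, α m * ⟪gradF (w t), ‖g m t‖⁻¹ • g m t⟫_ℝ
        = ∑ m ∈ B, α m * ⟪gradF (w t), ‖g m t‖⁻¹ • g m t⟫_ℝ
          + ∑ m ∈ Bᶜ, α m * ⟪gradF (w t), ‖g m t‖⁻¹ • g m t⟫_ℝ :=
      (Finset.sum_add_sum_compl B _).symm
    have hB_sum : ∑ m ∈ B, α m = 1 - Cα := by
      have := Finset.sum_add_sum_compl B α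
      rw [hαsum] at this; rw [hCα]; linarith
    have h1 : ∑ m ∈ B, α m * (-‖gradF (w t)‖)
        ≤ ∑ m ∈ B, α m * ⟪gradF (w t), ‖g m t‖⁻¹ • g m t⟫_ℝ := by
      refine Finset.sum_le_sum fun m _ => ?_
      exact mul_le_mul_of_nonneg_left (byz m) (le_of_lt (hαpos m))
    have h2 : ∑ m ∈ Bᶜ, α m * ((1 - θ ^ 2 / 2) * ‖gradF (w t)‖)
        ≤ ∑ m ∈ Bᶜ, α m * ⟪gradF (w t), ‖g m t‖⁻¹ • g m t⟫_ℝ := by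
      refine Finset.sum_le_sum fun m hm => ?_
      exact mul_le_mul_of_nonneg_left (honest m (Finset.mem_compl.mp hm))
        (le_of_lt (hαpos m))
    have e1 : ∑ m ∈ B, α m * (-‖gradF (w t)‖) = (1 - Cα) * (-‖gradF (w t)‖) := by
      rw [← Finset.sum_mul, hB_sum]
    have e2 : ∑ m ∈ Bᶜ, α m * ((1 - θ ^ 2 / 2) * ‖gradF (w t)‖)
        = Cα * ((1 - θ ^ 2 / 2) * ‖gradF (w t)‖) := by
      rw [← Finset.sum_mul, ← hCα]
    rw [hsum_split]
    have : c * ‖gradF (w t)‖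
        = (1 - Cα) * (-‖gradF (w t)‖) + Cα * ((1 - θ ^ 2 / 2) * ‖gradF (w t)‖) := by
      rw [hc_def]; ring
    rw [this]
    exact add_le_add (e1 ▸ h1) (e2 ▸ h2)
  -- descent inequality
  have hdesc : ∀ t, F (w (t + 1)) ≤ F (w t) - c * (η t * ‖gradF (w t)‖)
      + |L| / 2 * η t ^ 2 := by
    intro t
    have hdiffw : w (t + 1) - w t = -(η t • d t) := by
      have hdt : d t = ∑ m, α m • (‖g m t‖⁻¹ • g m t) := rfl
      rw [hupdate t, hdt]; abel
    have hs := hsmooth (w (t + 1)) (w t)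
    rw [hdiffw] at hs
    have hinner : ⟪gradF (w t), -(η t • d t)⟫_ℝ ≤ -(c * (η t * ‖gradF (w t)‖)) := by
      rw [inner_neg_right, real_inner_smul_right]
      have := mul_le_mul_of_nonneg_left (hkey t) (le_of_lt (hηpos t))
      nlinarith
    have hnorm2 : L / 2 * ‖-(η t • d t)‖ ^ 2 ≤ |L| / 2 * η t ^ 2 := by
      rw [norm_neg, norm_smul, Real.norm_eq_abs, abs_of_pos (hηpos t)]
      have hd2 : ‖d t‖ ^ 2 ≤ 1 := by
        nlinarith [hdnorm t, norm_nonneg (d t)]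
      have h1 : (η t * ‖d t‖) ^ 2 ≤ η t ^ 2 := by
        calc (η t * ‖d t‖) ^ 2 = η t ^ 2 * ‖d t‖ ^ 2 := mul_pow _ _ _
          _ ≤ η t ^ 2 * 1 := mul_le_mul_of_nonneg_left hd2 (sq_nonneg _)
          _ = η t ^ 2 := mul_one _
      have h2 : (0:ℝ) ≤ (η t * ‖d t‖) ^ 2 := sq_nonneg _
      have h3 : L / 2 ≤ |L| / 2 := by
        have := le_abs_self L; linarith
      have habs : (0:ℝ) ≤ |L| / 2 := by positivity
      calc L / 2 * (η t * ‖d t‖) ^ 2 ≤ |L| / 2 * (η t * ‖d t‖) ^ 2 :=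
            mul_le_mul_of_nonneg_right h3 h2
        _ ≤ |L| / 2 * η t ^ 2 := mul_le_mul_of_nonneg_left h1 habs
    have hgoal : F (w (t + 1)) - F (w t) ≤ -(c * (η t * ‖gradF (w t)‖)) + |L| / 2 * η t ^ 2 :=
      le_trans hs (add_le_add hinner hnorm2)
    linarith [hgoal]
  -- summed bound
  have hA : ∀ T, c * ∑ t ∈ range T, η t * ‖gradF (w t)‖
      ≤ F (w 0) - F (w T) + |L| / 2 * ∑ t ∈ range T, η t ^ 2 := by
    intro T
    induction T with
    | zero => simp
    | succ T ih =>
        rw [Finset.sum_range_succ, Finset.sum_range_succ, mul_add]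
        have := hdesc T
        linarith
  set K : ℝ := (F (w 0) - Finf + |L| / 2 * ∑' t, η t ^ 2) / c with hK_def
  have hbound : ∀ T, ∑ t ∈ range T, η t * ‖gradF (w t)‖ ≤ K := by
    intro T
    rw [hK_def, le_div_iff₀ hc]
    have hts : ∑ t ∈ range T, η t ^ 2 ≤ ∑' t, η t ^ 2 :=
      Summable.sum_le_tsum (range T) (fun i _ => sq_nonneg _) hsq
    have := hA T
    have hFT := hFinf (w T)
    have habs : (0:ℝ) ≤ |L| / 2 := by positivity
    nlinarith
  have hAnn : ∀ T, (0:ℝ) ≤ ∑ t ∈ range T, η t * ‖gradF (w t)‖ := by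
    intro T
    exact Finset.sum_nonneg fun t _ => mul_nonneg (hηpos t).le (norm_nonneg _)
  have hSnn : ∀ T, (0:ℝ) ≤ ∑ t ∈ range T, η t :=
    fun T => Finset.sum_nonneg fun t _ => (hηpos t).le
  constructor
  · -- tendsto part
    have hinv : Tendsto (fun T => (∑ t ∈ range T, η t)⁻¹) atTop (nhds 0) :=
      hdiv.inv_tendsto_atTop
    have hlim : Tendsto (fun T => K * (∑ t ∈ range T, η t)⁻¹) atTop (nhds 0) := by
      have := hinv.const_mul K
      simpa using this
    refine tendsto_of_tendsto_of_tendsto_of_le_of_le tendsto_const_nhds hlim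
      (fun T => ?_) (fun T => ?_)
    · exact mul_nonneg (one_div_nonneg.mpr (hSnn T)) (hAnn T)
    · rw [one_div, mul_comm K]
      exact mul_le_mul_of_nonneg_left (hbound T) (inv_nonneg.mpr (hSnn T))
  · -- infimum part
    have hbdd : BddBelow (Set.range fun t => ‖gradF (w t)‖) :=
      ⟨0, by rintro x ⟨t, rfl⟩; exact norm_nonneg _⟩
    refine le_antisymm ?_ (le_ciInf fun t => norm_nonneg _)
    by_contra hpos
    push_neg at hpos
    set ε : ℝ := ⨅ t, ‖gradF (w t)‖ with hε_def
    have hεle : ∀ t, ε ≤ ‖gradF (w t)‖ := fun t => ciInf_le hbdd t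
    have hεS : ∀ T, ε * ∑ t ∈ range T, η t ≤ K := by
      intro T
      calc ε * ∑ t ∈ range T, η t = ∑ t ∈ range T, η t * ε := by
            rw [Finset.mul_sum]; exact Finset.sum_congr rfl fun t _ => mul_comm _ _
        _ ≤ ∑ t ∈ range T, η t * ‖gradF (w t)‖ :=
            Finset.sum_le_sum fun t _ => mul_le_mul_of_nonneg_left (hεle t) (hηpos t).le
        _ ≤ K := hbound T
    obtain ⟨T, hT⟩ := (hdiv.eventually_ge_atTop (K / ε + 1)).exists
    have := hεS T
    have hKε : K / ε + 1 ≤ ∑ t ∈ range T, η t := hT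
    have : ε * (K / ε + 1) ≤ K := le_trans (mul_le_mul_of_nonneg_left hKε hpos.le) this
    rw [mul_add, mul_one, mul_div_cancel₀ _ (ne_of_gt hpos)] at this
    linarith
end

section
/- Convergence rate O(1/T^{1/2−δ}) in the non-convex case (Remark 1, second bullet). Suppose F is L-smooth and bounded below by F_inf, the bounded-heterogeneity condition with parameter θ holds along all iterates, every Byzantine upload is a nonzero vector, (2 − θ²/2)·C_α − 1 > 0, and the step sizes are η^t = η/(t+1)^{1/2+δ} with η > 0 and δ ∈ (0, 1/2). Then there exists a constant C > 0 (depending only on F(w^0) − F_inf, L, η, δ, θ, and C_α) such that for every T ≥ 1, (1/Σ_{t=0}^{T−1} η^t)·Σ_{t=0}^{T−1} η^t ‖∇F(w^t)‖ ≤ C / T^{1/2 − δ}. -/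
open Finset
open scoped InnerProductSpace

set_option maxHeartbeats 1600000

/-- Convergence rate O(1/T^{1/2−δ}) in the non-convex case (Remark 1, second bullet). -/
theorem fedNGA_nonconvex_rate
    {E : Type*} [NormedAddCommGroup E] [InnerProductSpace ℝ E]
    {ι : Type*} [Fintype ι] [DecidableEq ι]
    (α : ι → ℝ) (hαpos : ∀ m, 0 < α m) (hαsum : ∑ m, α m = 1)
    (Fm : ι → E → ℝ) (gradFm : ι → E → E)
    (F : E → ℝ) (hF : ∀ w, F w = ∑ m, α m * Fm m w)
    (gradF : E → E) (hgradF : ∀ w, gradF w = ∑ m, α m • gradFm m w)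
    (B : Finset ι) (Cα : ℝ) (hCα : Cα = ∑ m ∈ Bᶜ, α m)
    (L θ : ℝ)
    (hsmooth : ∀ w1 w2 : E, F w1 - F w2 ≤ ⟪gradF w2, w1 - w2⟫_ℝ + L / 2 * ‖w1 - w2‖ ^ 2)
    (Finf : ℝ) (hFinf : ∀ w : E, Finf ≤ F w)
    -- diminishing step sizes η^t = η / (t+1)^{1/2+δ}
    (ηc δ : ℝ) (hηc : 0 < ηc) (hδ : δ ∈ Set.Ioo (0 : ℝ) (1 / 2))
    (η : ℕ → ℝ) (hη : ∀ t, η t = ηc / ((t : ℝ) + 1) ^ ((1 : ℝ) / 2 + δ))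
    -- Fed-NGA iterates
    (w : ℕ → E) (g : ι → ℕ → E)
    (hg_honest : ∀ m ∉ B, ∀ t, g m t = gradFm m (w t))
    (hg_byz : ∀ m ∈ B, ∀ t, g m t ≠ 0)
    (hupdate : ∀ t, w (t + 1) = w t - η t • ∑ m, α m • (‖g m t‖⁻¹ • g m t))
    -- bounded heterogeneity along the iterates
    (hgrad_ne : ∀ t, gradF (w t) ≠ 0)
    (hgradm_ne : ∀ t, ∀ m ∉ B, gradFm m (w t) ≠ 0)
    (hhet : ∀ t, ∀ m ∉ B,
      ‖‖gradFm m (w t)‖⁻¹ • gradFm m (w t) - ‖gradF (w t)‖⁻¹ • gradF (w t)‖ ≤ θ)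
    (hcond : (2 - θ ^ 2 / 2) * Cα - 1 > 0) :
    ∃ C > 0, ∀ T : ℕ, 1 ≤ T →
      (1 / ∑ t ∈ range T, η t) * ∑ t ∈ range T, η t * ‖gradF (w t)‖ ≤
        C / (T : ℝ) ^ ((1 : ℝ) / 2 - δ) := by

  obtain ⟨hδ0, hδ2⟩ := hδ
  set κ : ℝ := (2 - θ ^ 2 / 2) * Cα - 1 with hκdef
  have hκ : 0 < κ := hcond
  set L' : ℝ := max L 0 with hL'def
  have hL'0 : 0 ≤ L' := le_max_right _ _
  have hLL' : L ≤ L' := le_max_left _ _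
  set p : ℝ := 1/2 + δ with hpdef
  have hp0 : 0 < p := by rw [hpdef]; linarith
  have hηpos : ∀ t : ℕ, 0 < η t := by
    intro t; rw [hη]
    have : (0:ℝ) < ((t:ℝ) + 1) ^ ((1:ℝ)/2 + δ) := Real.rpow_pos_of_pos (by positivity) _
    positivity
  set u : ℕ → E := fun t => ∑ m, α m • (‖g m t‖⁻¹ • g m t) with hu
  -- norm bound on the update direction
  have hunorm : ∀ t, ‖u t‖ ≤ 1 := by
    intro t
    calc ‖u t‖ ≤ ∑ m, ‖α m • (‖g m t‖⁻¹ • g m t)‖ := norm_sum_le _ _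
      _ ≤ ∑ m, α m := by
          apply Finset.sum_le_sum
          intro m _
          rw [norm_smul, norm_smul, norm_inv, norm_norm,
            Real.norm_eq_abs, abs_of_pos (hαpos m)]
          rcases eq_or_ne (g m t) 0 with h | h
          · simp [h, (hαpos m).le]
          · rw [inv_mul_cancel₀ (norm_ne_zero_iff.mpr h), mul_one]
      _ = 1 := hαsum
  -- inner product lower bound
  have hinner : ∀ t, κ * ‖gradF (w t)‖ ≤ ⟪gradF (w t), u t⟫_ℝ := by
    intro t
    set a := gradF (w t) with ha
    have hane := hgrad_ne t
    have hna : 0 < ‖a‖ := norm_pos_iff.mpr hane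
    have hexp : ⟪a, u t⟫_ℝ = ∑ m, α m * ⟪a, ‖g m t‖⁻¹ • g m t⟫_ℝ := by
      rw [hu]
      simp [inner_sum, real_inner_smul_right]
    have hSB : ∑ m ∈ B, α m = 1 - Cα := by
      have := Finset.sum_compl_add_sum B α
      rw [hαsum] at this
      rw [hCα]; linarith
    have hhonest : ∀ m ∈ Bᶜ, (1 - θ^2/2) * ‖a‖ ≤ ⟪a, ‖g m t‖⁻¹ • g m t⟫_ℝ := by
      intro m hm
      rw [Finset.mem_compl] at hm
      rw [hg_honest m hm t]
      set b := gradFm m (w t) with hb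
      have hbne := hgradm_ne t m hm
      have hnb : 0 < ‖b‖ := norm_pos_iff.mpr hbne
      set x := ‖a‖⁻¹ • a with hx
      set y := ‖b‖⁻¹ • b with hy
      have hx1 : ‖x‖ = 1 := by
        rw [hx, norm_smul, norm_inv, norm_norm, inv_mul_cancel₀ hna.ne']
      have hy1 : ‖y‖ = 1 := by
        rw [hy, norm_smul, norm_inv, norm_norm, inv_mul_cancel₀ hnb.ne']
      have hθ : ‖y - x‖ ≤ θ := hhet t m hm
      have hθsq : ‖y - x‖^2 ≤ θ^2 := by nlinarith [norm_nonneg (y - x)]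
      have hns := norm_sub_sq_real y x
      have hyx : ⟪y, x⟫_ℝ = ⟪x, y⟫_ℝ := real_inner_comm x y
      have hxy : 1 - θ^2/2 ≤ ⟪x, y⟫_ℝ := by nlinarith [hns, hx1, hy1]
      have hkey : ⟪a, y⟫_ℝ = ‖a‖ * ⟪x, y⟫_ℝ := by
        rw [hx, real_inner_smul_left, ← mul_assoc, mul_inv_cancel₀ hna.ne', one_mul]
      rw [hkey]
      calc (1 - θ^2/2) * ‖a‖ = ‖a‖ * (1 - θ^2/2) := by ring
        _ ≤ ‖a‖ * ⟪x, y⟫_ℝ := mul_le_mul_of_nonneg_left hxy hna.le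
    have hbyz : ∀ m ∈ B, -‖a‖ ≤ ⟪a, ‖g m t‖⁻¹ • g m t⟫_ℝ := by
      intro m hm
      have hgne := hg_byz m hm t
      have h1 : ‖(‖g m t‖⁻¹ • g m t)‖ = 1 := by
        rw [norm_smul, norm_inv, norm_norm, inv_mul_cancel₀ (norm_ne_zero_iff.mpr hgne)]
      have h2 := abs_real_inner_le_norm a (‖g m t‖⁻¹ • g m t)
      rw [h1, mul_one] at h2
      have h3 := neg_abs_le (⟪a, ‖g m t‖⁻¹ • g m t⟫_ℝ)
      linarith
    have hS1 : Cα * ((1 - θ^2/2) * ‖a‖) ≤ ∑ m ∈ Bᶜ, α m * ⟪a, ‖g m t‖⁻¹ • g m t⟫_ℝ := by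
      calc Cα * ((1 - θ^2/2) * ‖a‖) = ∑ m ∈ Bᶜ, α m * ((1 - θ^2/2) * ‖a‖) := by
            rw [hCα, Finset.sum_mul]
        _ ≤ _ := Finset.sum_le_sum fun m hm =>
            mul_le_mul_of_nonneg_left (hhonest m hm) (hαpos m).le
    have hS2 : (1 - Cα) * (-‖a‖) ≤ ∑ m ∈ B, α m * ⟪a, ‖g m t‖⁻¹ • g m t⟫_ℝ := by
      calc (1 - Cα) * (-‖a‖) = ∑ m ∈ B, α m * (-‖a‖) := by rw [← Finset.sum_mul, hSB]
        _ ≤ _ := Finset.sum_le_sum fun m hm =>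
            mul_le_mul_of_nonneg_left (hbyz m hm) (hαpos m).le
    have hsplit : ∑ m, α m * ⟪a, ‖g m t‖⁻¹ • g m t⟫_ℝ
        = ∑ m ∈ Bᶜ, α m * ⟪a, ‖g m t‖⁻¹ • g m t⟫_ℝ
          + ∑ m ∈ B, α m * ⟪a, ‖g m t‖⁻¹ • g m t⟫_ℝ :=
      (Finset.sum_compl_add_sum B _).symm
    have hκeq : κ * ‖a‖ = Cα * ((1 - θ^2/2) * ‖a‖) + (1 - Cα) * (-‖a‖) := by
      rw [hκdef]; ring
    rw [hexp, hsplit, hκeq]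
    exact add_le_add hS1 hS2
  -- per-step descent inequality
  have hdescent : ∀ t, κ * (η t * ‖gradF (w t)‖)
      ≤ F (w t) - F (w (t+1)) + L'/2 * (η t)^2 := by
    intro t
    have hs := hsmooth (w (t+1)) (w t)
    have hw : w (t+1) - w t = -(η t • u t) := by rw [hupdate t, hu]; abel
    rw [hw, inner_neg_right, real_inner_smul_right, norm_neg, norm_smul,
      Real.norm_eq_abs, abs_of_pos (hηpos t)] at hs
    have h1 := hinner t
    have h2 := hunorm t
    have hηt := hηpos t
    have h5 : ‖u t‖^2 ≤ 1 := by nlinarith [norm_nonneg (u t), h2]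
    have hsq1 : (η t * ‖u t‖)^2 ≤ (η t)^2 := by
      rw [mul_pow]
      calc (η t)^2 * ‖u t‖^2 ≤ (η t)^2 * 1 := mul_le_mul_of_nonneg_left h5 (sq_nonneg _)
        _ = (η t)^2 := mul_one _
    have hLterm : L/2 * (η t * ‖u t‖)^2 ≤ L'/2 * (η t)^2 := by
      have h4 : (0:ℝ) ≤ (η t * ‖u t‖)^2 := sq_nonneg _
      nlinarith
    have h3 : η t * (κ * ‖gradF (w t)‖) ≤ η t * ⟪gradF (w t), u t⟫_ℝ :=
      mul_le_mul_of_nonneg_left h1 hηt.le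
    have hstep : η t * ⟪gradF (w t), u t⟫_ℝ ≤ F (w t) - F (w (t+1)) + L/2 * (η t * ‖u t‖)^2 := by
      linarith [hs]
    have h7 : η t * (κ * ‖gradF (w t)‖) ≤ F (w t) - F (w (t+1)) + L/2 * (η t * ‖u t‖)^2 :=
      le_trans h3 hstep
    linarith [h7, hLterm]
  -- telescoping sum
  have hsumineq : ∀ T : ℕ, κ * ∑ t ∈ range T, η t * ‖gradF (w t)‖
      ≤ (F (w 0) - Finf) + L'/2 * ∑ t ∈ range T, (η t)^2 := by
    intro T
    have htel : ∑ t ∈ range T, (F (w t) - F (w (t+1))) = F (w 0) - F (w T) :=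
      Finset.sum_range_sub' (fun t => F (w t)) T
    have h1 : ∑ t ∈ range T, κ * (η t * ‖gradF (w t)‖)
        ≤ ∑ t ∈ range T, (F (w t) - F (w (t+1)) + L'/2 * (η t)^2) :=
      Finset.sum_le_sum fun t _ => hdescent t
    rw [Finset.sum_add_distrib, htel, ← Finset.mul_sum, ← Finset.mul_sum] at h1
    have h2 := hFinf (w T)
    linarith
  -- summability of the squared step sizes
  set q : ℝ := 1 + 2*δ with hqdef
  have hq1 : 1 < q := by rw [hqdef]; linarith
  have hfsummable : Summable (fun n : ℕ => 1 / ((n:ℝ)+1) ^ q) := by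
    have h0 : Summable (fun n : ℕ => 1 / (n:ℝ) ^ q) :=
      Real.summable_one_div_nat_rpow.mpr hq1
    have h1 : Summable (fun n : ℕ => 1 / ((n + 1 : ℕ):ℝ) ^ q) :=
      (summable_nat_add_iff 1).mpr h0
    exact h1.congr fun n => by push_cast; ring_nf
  set S : ℝ := ∑' n : ℕ, 1 / ((n:ℝ)+1) ^ q with hSdef
  have hS0 : 0 ≤ S := tsum_nonneg fun n => by positivity
  have hsq : ∀ T : ℕ, ∑ t ∈ range T, (η t)^2 ≤ ηc^2 * S := by
    intro T
    have heq : ∀ t : ℕ, (η t)^2 = ηc^2 * (1/((t:ℝ)+1)^q) := by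
      intro t
      rw [hη, div_pow]
      have hb : (0:ℝ) < (t:ℝ)+1 := by positivity
      have h2 : (((t:ℝ)+1)^((1:ℝ)/2+δ))^2 = ((t:ℝ)+1)^q := by
        rw [sq, ← Real.rpow_add hb]
        congr 1
        rw [hqdef]; ring
      rw [h2]; ring
    calc ∑ t ∈ range T, (η t)^2 = ηc^2 * ∑ t ∈ range T, 1/((t:ℝ)+1)^q := by
          rw [Finset.mul_sum]; exact Finset.sum_congr rfl fun t _ => heq t
      _ ≤ ηc^2 * S := by
          apply mul_le_mul_of_nonneg_left _ (by positivity)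
          exact Summable.sum_le_tsum (range T) (fun i _ => by positivity) hfsummable
  -- lower bound on the sum of step sizes
  have hlow : ∀ T : ℕ, 1 ≤ T → ηc * (T:ℝ)^((1:ℝ)/2 - δ) ≤ ∑ t ∈ range T, η t := by
    intro T hT
    have hT0 : (0:ℝ) < (T:ℝ) := by exact_mod_cast hT
    have hterm : ∀ t ∈ range T, ηc / (T:ℝ)^p ≤ η t := by
      intro t ht
      rw [hη]
      have h1 : (t:ℝ)+1 ≤ (T:ℝ) := by
        have := Finset.mem_range.mp ht
        exact_mod_cast Nat.succ_le_of_lt this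
      have h2 : ((t:ℝ)+1)^p ≤ (T:ℝ)^p :=
        Real.rpow_le_rpow (by positivity) h1 hp0.le
      have h3 : (0:ℝ) < ((t:ℝ)+1)^p := Real.rpow_pos_of_pos (by positivity) _
      exact div_le_div_of_nonneg_left hηc.le h3 h2
    have heq : ηc * (T:ℝ)^((1:ℝ)/2 - δ) = (T:ℝ) * (ηc / (T:ℝ)^p) := by
      rw [show (1:ℝ)/2 - δ = 1 - p by rw [hpdef]; ring,
        Real.rpow_sub hT0, Real.rpow_one]
      have : (0:ℝ) < (T:ℝ)^p := Real.rpow_pos_of_pos hT0 _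
      field_simp
    rw [heq]
    have := Finset.card_nsmul_le_sum (range T) η (ηc / (T:ℝ)^p) hterm
    simpa [nsmul_eq_mul, Finset.card_range] using this
  -- assemble
  set Δ : ℝ := F (w 0) - Finf with hΔdef
  have hΔ0 : 0 ≤ Δ := by have := hFinf (w 0); rw [hΔdef]; linarith
  set D : ℝ := Δ + L'/2 * (ηc^2 * S) with hDdef
  have hD0 : 0 ≤ D := by
    have : 0 ≤ L'/2 * (ηc^2 * S) := by positivity
    rw [hDdef]; linarith
  refine ⟨(D + 1)/(κ * ηc), div_pos (by linarith) (mul_pos hκ hηc), ?_⟩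
  intro T hT
  have hT0 : (0:ℝ) < (T:ℝ) := by exact_mod_cast hT
  set tp : ℝ := (T:ℝ)^((1:ℝ)/2 - δ) with htpdef
  have htp : 0 < tp := Real.rpow_pos_of_pos hT0 _
  set A : ℝ := ∑ t ∈ range T, η t with hAdef
  set G : ℝ := ∑ t ∈ range T, η t * ‖gradF (w t)‖ with hGdef
  have h2 : ηc * tp ≤ A := hlow T hT
  have hApos : 0 < A := lt_of_lt_of_le (by positivity) h2
  have hG0 : 0 ≤ G :=
    Finset.sum_nonneg fun t _ => mul_nonneg (hηpos t).le (norm_nonneg _)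
  have hmain : κ * G ≤ D := by
    have ha := hsumineq T
    have hb := hsq T
    have hc : L'/2 * ∑ t ∈ range T, (η t)^2 ≤ L'/2 * (ηc^2 * S) :=
      mul_le_mul_of_nonneg_left hb (by positivity)
    rw [hGdef, hDdef]; linarith
  rw [one_div_mul_eq_div, div_le_div_iff₀ hApos htp]
  have h1 : G ≤ D / κ := by
    rw [le_div_iff₀ hκ]; linarith [hmain]
  have hCηc : (D + 1)/(κ * ηc) * (ηc * tp) = ((D+1)/κ) * tp := by
    field_simp
  calc G * tp ≤ (D/κ) * tp := mul_le_mul_of_nonneg_right h1 htp.le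
    _ ≤ ((D+1)/κ) * tp := by
        apply mul_le_mul_of_nonneg_right _ htp.le
        gcongr
        linarith
    _ = (D + 1)/(κ * ηc) * (ηc * tp) := hCηc.symm
    _ ≤ (D + 1)/(κ * ηc) * A :=
        mul_le_mul_of_nonneg_left h2 (div_nonneg (by linarith) (mul_pos hκ hηc).le)
end
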